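/- Let (Q_k)_{k≥0} be a sequence of positive bounded operators on a Hilbert space h that is non-increasing (Q_{k+1} ≤ Q_k). If for all u in a dense subspace D of h the series ∑_{k=0}^∞ (1/(k+1)) ⟨u, Q_k u⟩ converges, then Q_k converges strongly to 0 as k → ∞. -/

import Mathlib

open Filter Topology

/-- A non-increasing sequence of positive bounded operators `Q k` on a
complex Hilbert space converges strongly to `0` provided the series
`∑ (1/(k+1)) ⟨u, Q_k u⟩` converges for all `u` in a dense subspace `D`. -/
theorem qds_strong_limit_zero
    {H : Type*} [NormedAddCommGroup H] [InnerProductSpace ℂ H] [CompleteSpace H]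
    (Q : ℕ → H →L[ℂ] H)
    (hsa : ∀ k, IsSelfAdjoint (Q k))
    (hpos : ∀ k u, 0 ≤ (inner ℂ u (Q k u) : ℂ).re)
    (hmono : ∀ k u, ((inner ℂ u (Q (k + 1) u) : ℂ)).re ≤ ((inner ℂ u (Q k u) : ℂ)).re)
    (D : Set H) (hD : Dense D)
    (hsum : ∀ u ∈ D,
      Summable (fun k : ℕ => (1 / (k + 1 : ℝ)) * ((inner ℂ u (Q k u) : ℂ)).re)) :
    ∀ u : H, Tendsto (fun k => Q k u) atTop (𝓝 0) := by
  -- quadratic form is antitone in k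
  have hanti : ∀ u : H, Antitone (fun k => ((inner ℂ u (Q k u) : ℂ)).re) :=
    fun u => antitone_nat_of_succ_le (fun k => hmono k u)
  have hle0 : ∀ k (u : H), ((inner ℂ u (Q k u) : ℂ)).re ≤ ((inner ℂ u (Q 0 u) : ℂ)).re :=
    fun k u => hanti u (Nat.zero_le k)
  -- key Cauchy–Schwarz type inequality
  have hC : ∀ k (w : H), ‖Q k w‖ ^ 2 ≤ ‖Q 0‖ * ((inner ℂ w (Q k w) : ℂ)).re := by
    intro k w
    set T := Q k with hT
    set y := T w with hy
    have hsym : ∀ a b : H, (inner ℂ a (T b) : ℂ) = inner ℂ (T a) b := by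
      intro a b
      have := (hsa k).isSymmetric a b
      simpa [hT] using this.symm
    have hz : (inner ℂ y (T w) : ℂ) = ((‖y‖ : ℂ)) ^ 2 := by
      rw [hy]; exact inner_self_eq_norm_sq_to_K (T w)
    have hz2 : (inner ℂ w (T y) : ℂ) = ((‖y‖ : ℂ)) ^ 2 := by
      rw [hsym w y, hy]; exact inner_self_eq_norm_sq_to_K (T w)
    -- p(t) = re⟪w + t y, T(w + t y)⟫ ≥ 0
    have hquad : ∀ t : ℝ,
        0 ≤ ((inner ℂ y (T y) : ℂ)).re * (t * t) + (2 * ‖y‖ ^ 2) * t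
          + ((inner ℂ w (T w) : ℂ)).re := by
      intro t
      have h0 := hpos k (w + (t : ℂ) • y)
      have hexp : ((inner ℂ (w + (t : ℂ) • y) (T (w + (t : ℂ) • y)) : ℂ)).re
          = ((inner ℂ y (T y) : ℂ)).re * (t * t) + (2 * ‖y‖ ^ 2) * t
            + ((inner ℂ w (T w) : ℂ)).re := by
        have expand : (inner ℂ (w + (t : ℂ) • y) (T (w + (t : ℂ) • y)) : ℂ)
            = inner ℂ w (T w) + (t : ℂ) * inner ℂ w (T y)
              + (starRingEnd ℂ) (t : ℂ) * inner ℂ y (T w)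
              + (starRingEnd ℂ) (t : ℂ) * ((t : ℂ) * inner ℂ y (T y)) := by
          simp only [map_add, map_smul, inner_add_left, inner_add_right, inner_smul_left,
            inner_smul_right, smul_eq_mul]
          ring
        rw [expand, hz, hz2]
        simp [Complex.add_re, Complex.mul_re, Complex.conj_re, Complex.conj_im,
          Complex.ofReal_re, Complex.ofReal_im, ← Complex.ofReal_pow]
        ring
      rw [hexp] at h0
      exact h0
    have hdisc := discrim_le_zero hquad
    rw [discrim] at hdisc
    -- (2‖y‖²)² - 4 b c ≤ 0
    have hb : ((inner ℂ y (T y) : ℂ)).re ≤ ‖Q 0‖ * ‖y‖ ^ 2 := by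
      have h1 : ((inner ℂ y (T y) : ℂ)).re ≤ ((inner ℂ y (Q 0 y) : ℂ)).re := hle0 k y
      have h2 : ((inner ℂ y (Q 0 y) : ℂ)).re ≤ ‖(inner ℂ y (Q 0 y) : ℂ)‖ := Complex.re_le_norm _
      have h3 : ‖(inner ℂ y (Q 0 y) : ℂ)‖ ≤ ‖y‖ * ‖Q 0 y‖ := norm_inner_le_norm _ _
      have h4 : ‖Q 0 y‖ ≤ ‖Q 0‖ * ‖y‖ := (Q 0).le_opNorm y
      nlinarith [norm_nonneg y]
    have hc := hpos k w
    have hyn : (0:ℝ) ≤ ‖y‖ := norm_nonneg y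
    have hQn : (0:ℝ) ≤ ‖Q 0‖ := norm_nonneg _
    -- ‖y‖⁴ ≤ b c ≤ ‖Q0‖‖y‖² c  ⇒  ‖y‖² ≤ ‖Q0‖ c
    nlinarith [sq_nonneg ‖y‖, mul_nonneg hQn hc,
      mul_le_mul_of_nonneg_right hb hc]
  have hQbound : ∀ k (w : H), ‖Q k w‖ ≤ ‖Q 0‖ * ‖w‖ := by
    intro k w
    have h1 := hC k w
    have h2 : ((inner ℂ w (Q k w) : ℂ)).re ≤ ‖Q 0‖ * ‖w‖ ^ 2 := by
      have h1' : ((inner ℂ w (Q k w) : ℂ)).re ≤ ((inner ℂ w (Q 0 w) : ℂ)).re := hle0 k w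
      have h2' : ((inner ℂ w (Q 0 w) : ℂ)).re ≤ ‖(inner ℂ w (Q 0 w) : ℂ)‖ := Complex.re_le_norm _
      have h3' : ‖(inner ℂ w (Q 0 w) : ℂ)‖ ≤ ‖w‖ * ‖Q 0 w‖ := norm_inner_le_norm _ _
      have h4' : ‖Q 0 w‖ ≤ ‖Q 0‖ * ‖w‖ := (Q 0).le_opNorm w
      nlinarith [norm_nonneg w]
    have hQn : (0:ℝ) ≤ ‖Q 0‖ := norm_nonneg _
    nlinarith [norm_nonneg (Q k w), norm_nonneg w, mul_nonneg hQn (norm_nonneg w)]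
  -- step: for u ∈ D the quadratic form tends to 0
  have hformD : ∀ u ∈ D, Tendsto (fun k => ((inner ℂ u (Q k u) : ℂ)).re) atTop (𝓝 0) := by
    intro u hu
    set a : ℕ → ℝ := fun k => ((inner ℂ u (Q k u) : ℂ)).re with ha
    have hbdd : BddBelow (Set.range a) := ⟨0, by rintro x ⟨k, rfl⟩; exact hpos k u⟩
    have htend : Tendsto a atTop (𝓝 (⨅ k, a k)) :=
      tendsto_atTop_ciInf (hanti u) hbdd
    have hL0 : 0 ≤ ⨅ k, a k := le_ciInf (fun k => hpos k u)
    rcases hL0.lt_or_eq with hL | hL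
    · exfalso
      set L := ⨅ k, a k with hLdef
      have hLle : ∀ k, L ≤ a k := fun k => ciInf_le hbdd k
      have hsum1 : Summable (fun k : ℕ => L * (1 / (k + 1 : ℝ))) := by
        refine (hsum u hu).of_nonneg_of_le (fun k => ?_) (fun k => ?_)
        · positivity
        · have : (0:ℝ) < 1 / (k + 1 : ℝ) := by positivity
          calc L * (1 / (k + 1 : ℝ)) = (1 / (k + 1 : ℝ)) * L := by ring
          _ ≤ (1 / (k + 1 : ℝ)) * a k := by
              exact mul_le_mul_of_nonneg_left (hLle k) this.le
      have hsum2 : Summable (fun k : ℕ => (1 / (k + 1 : ℝ))) := by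
        have := hsum1.mul_left L⁻¹
        have hne : L ≠ 0 := ne_of_gt hL
        convert this using 2 with k
        · rfl
        field_simp
      have hns : ¬ Summable (fun k : ℕ => (1 / (k + 1 : ℝ))) := by
        intro hs
        have : Summable (fun n : ℕ => 1 / ((n : ℝ))) := by
          rw [← summable_nat_add_iff 1]
          convert hs using 2 with k
          · rfl
          push_cast
          ring
        exact Real.not_summable_one_div_natCast this
      exact hns hsum2
    · rw [← hL] at htend; exact htend
  -- strong convergence for u ∈ D
  have hD0 : ∀ u ∈ D, Tendsto (fun k => Q k u) atTop (𝓝 0) := by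
    intro u hu
    rw [tendsto_zero_iff_norm_tendsto_zero]
    have hsq : Tendsto (fun k => Real.sqrt (‖Q 0‖ * ((inner ℂ u (Q k u) : ℂ)).re))
        atTop (𝓝 0) := by
      have := ((hformD u hu).const_mul ‖Q 0‖)
      have h0 : Tendsto (fun k => ‖Q 0‖ * ((inner ℂ u (Q k u) : ℂ)).re) atTop (𝓝 0) := by
        simpa using this
      have h1 := (Real.continuous_sqrt.tendsto 0).comp h0
      rw [Real.sqrt_zero] at h1
      exact h1
    refine squeeze_zero (fun k => norm_nonneg _) (fun k => ?_) hsq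
    have h1 := hC k u
    calc ‖Q k u‖ = Real.sqrt (‖Q k u‖ ^ 2) := by
          rw [Real.sqrt_sq (norm_nonneg _)]
    _ ≤ Real.sqrt (‖Q 0‖ * ((inner ℂ u (Q k u) : ℂ)).re) := Real.sqrt_le_sqrt h1
  -- density argument
  intro u
  rw [Metric.tendsto_atTop]
  intro ε hε
  have hCpos : (0:ℝ) < ‖Q 0‖ + 1 := by positivity
  obtain ⟨v, hvD, hdist⟩ := hD.exists_dist_lt u (by positivity : (0:ℝ) < ε / (2 * (‖Q 0‖ + 1)))
  have hv := hD0 v hvD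
  rw [tendsto_zero_iff_norm_tendsto_zero] at hv
  obtain ⟨N, hN⟩ := (Metric.tendsto_atTop.mp hv) (ε / 2) (by positivity)
  refine ⟨N, fun n hn => ?_⟩
  have h1 : ‖Q n v‖ < ε / 2 := by
    have := hN n hn
    rwa [Real.dist_eq, sub_zero, abs_of_nonneg (norm_nonneg _)] at this
  have h2 : ‖Q n (u - v)‖ ≤ ‖Q 0‖ * ‖u - v‖ := hQbound n _
  have h3 : ‖u - v‖ < ε / (2 * (‖Q 0‖ + 1)) := by
    rwa [dist_eq_norm] at hdist
  have h4 : ‖Q 0‖ * ‖u - v‖ < ε / 2 := by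
    have hQn : (0:ℝ) ≤ ‖Q 0‖ := norm_nonneg _
    calc ‖Q 0‖ * ‖u - v‖ ≤ (‖Q 0‖ + 1) * ‖u - v‖ := by
          nlinarith [norm_nonneg (u - v)]
    _ < (‖Q 0‖ + 1) * (ε / (2 * (‖Q 0‖ + 1))) := by
          exact mul_lt_mul_of_pos_left h3 hCpos
    _ = ε / 2 := by
          rw [mul_div_assoc', mul_comm 2 (‖Q 0‖ + 1), mul_div_mul_left ε 2 hCpos.ne']
  rw [dist_eq_norm, sub_zero]
  calc ‖Q n u‖ = ‖Q n (u - v) + Q n v‖ := by rw [← map_add, sub_add_cancel]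
  _ ≤ ‖Q n (u - v)‖ + ‖Q n v‖ := norm_add_le _ _
  _ < ε / 2 + ε / 2 := by linarith
  _ = ε := by ring
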